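/- In the ABS iteration y_{k+1} = y_k - (f_k(y_k)/δ_k) p_k applied to a linear system a_j^T x = b_j (so f_j(x) = a_j^T x - b_j), after step k the iterate satisfies all equations processed so far: a_j^T y_{k+1} = b_j for all j ≤ k. -/

import Mathlib

open scoped Matrix

/-- In the ABS iteration applied to the linear system `aⱼᵀ x = bⱼ`, after
step `k` the iterate satisfies all equations processed so far:
`aⱼᵀ y_{k+1} = bⱼ` for all `j ≤ k`. -/
theorem abs_iterate_satisfies_processed_equations (n m : ℕ)
    (H : ℕ → Matrix (Fin n) (Fin n) ℝ) (a z p y : ℕ → (Fin n → ℝ)) (b : ℕ → ℝ)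
    (hH1 : H 1 = 1)
    (hp : ∀ k, 1 ≤ k → k ≤ m → p k = (H k).transpose.mulVec (z k))
    (hδ : ∀ k, 1 ≤ k → k ≤ m → p k ⬝ᵥ a k ≠ 0)
    (hrec : ∀ k, 1 ≤ k → k ≤ m →
      H (k + 1) = H k - (p k ⬝ᵥ a k)⁻¹ • Matrix.vecMulVec ((H k).mulVec (a k)) (p k))
    (hy : ∀ k, 1 ≤ k → k ≤ m →
      y (k + 1) = y k - ((a k ⬝ᵥ y k - b k) / (p k ⬝ᵥ a k)) • p k) :
    ∀ k, 1 ≤ k → k ≤ m → ∀ j, 1 ≤ j → j ≤ k → a j ⬝ᵥ y (k + 1) = b j := by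
  have hpa : ∀ k, 1 ≤ k → k ≤ m → ∀ j, p k ⬝ᵥ a j = z k ⬝ᵥ (H k).mulVec (a j) := by
    intro k h1 hm j
    rw [hp k h1 hm, Matrix.mulVec_transpose, Matrix.dotProduct_mulVec]
  have hvmv : ∀ (u v w : Fin n → ℝ), (Matrix.vecMulVec u v).mulVec w = (v ⬝ᵥ w) • u := by
    intro u v w
    funext i
    simp [Matrix.mulVec, Matrix.vecMulVec_apply, dotProduct, Finset.mul_sum,
      mul_comm, mul_assoc, mul_left_comm]
  have key : ∀ k, 1 ≤ k → k ≤ m → ∀ j, 1 ≤ j → j ≤ k → (H (k + 1)).mulVec (a j) = 0 := by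
    intro k
    induction k with
    | zero => omega
    | succ k ih =>
      intro h1 hm j hj1 hjk
      rw [hrec (k + 1) h1 hm, Matrix.sub_mulVec, Matrix.smul_mulVec, hvmv]
      rcases eq_or_lt_of_le hjk with rfl | hlt
      · have hδ' := hδ (k + 1) h1 hm
        have h2 : (p (k+1) ⬝ᵥ a (k+1))⁻¹ • ((p (k+1) ⬝ᵥ a (k+1)) • (H (k+1)).mulVec (a (k+1)))
            = (H (k+1)).mulVec (a (k+1)) := by
          rw [smul_smul, inv_mul_cancel₀ hδ', one_smul]
        rw [h2, sub_self]
      · have hk1 : 1 ≤ k := by omega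
        have hkm : k ≤ m := by omega
        have hHj : (H (k + 1)).mulVec (a j) = 0 := ih hk1 hkm j hj1 (by omega)
        have hpj : p (k + 1) ⬝ᵥ a j = 0 := by
          rw [hpa (k + 1) h1 hm j, hHj, dotProduct_zero]
        rw [hHj, hpj, zero_smul, smul_zero, sub_zero]
  intro k
  induction k with
  | zero => omega
  | succ k ih =>
    intro h1 hm j hj1 hjk
    rw [hy (k + 1) h1 hm, dotProduct_sub, dotProduct_smul]
    have hcomm : a j ⬝ᵥ p (k + 1) = p (k + 1) ⬝ᵥ a j := dotProduct_comm _ _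
    rcases eq_or_lt_of_le hjk with rfl | hlt
    · have hδ' := hδ (k + 1) h1 hm
      rw [hcomm]
      rw [smul_eq_mul, div_mul_cancel₀ _ hδ', sub_sub_cancel]
    · have hk1 : 1 ≤ k := by omega
      have hkm : k ≤ m := by omega
      have hpj : p (k + 1) ⬝ᵥ a j = 0 := by
        rw [hpa (k + 1) h1 hm j, key k hk1 hkm j hj1 (by omega), dotProduct_zero]
      rw [hcomm, hpj, smul_zero, sub_zero]
      exact ih hk1 hkm j hj1 (by omega)
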